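/- Let N ≥ 1, k ≥ 1, let V_1,…,V_k be an orthonormal family in ℂ^N spanning a subspace V, let ξ_1,…,ξ_k be an orthonormal family in ℂ^N spanning a subspace E, let α ≥ 0 and α_1,…,α_k ≥ 0. Define a = ∑_{m=1}^{k} | |⟨ξ_m, V_m⟩|² − α_m | + 2 ∑_{m=1}^{k} ∑_{n≠m} |⟨ξ_n, V_m⟩| + ∑_{m=1}^{k} ( ∑_{n≠m} |⟨ξ_n, V_m⟩| )². Then for every unit vector u ∈ ℂ^N, | ‖P_V u‖₂² − α | ≤ (2k + α) ‖P_{E^⊥} u‖₂ + max_{1≤m≤k} |α_m − α| + a. -/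

import Mathlib

set_option maxHeartbeats 2000000
open scoped InnerProductSpace

lemma aux_onb {k N : ℕ} {W : Fin k → EuclideanSpace ℂ (Fin N)} (hW : Orthonormal ℂ W) :
    ∃ b : OrthonormalBasis (Fin k) ℂ (Submodule.span ℂ (Set.range W)),
      ∀ m, (b m : EuclideanSpace ℂ (Fin N)) = W m := by
  have hli := hW.linearIndependent
  have hco : ⇑(Module.Basis.span hli) = fun i =>
      (⟨W i, Submodule.subset_span (Set.mem_range_self i)⟩ :
        Submodule.span ℂ (Set.range W)) :=
    funext fun i => Module.Basis.span_apply hli i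
  have hsp : ⊤ ≤ Submodule.span ℂ (Set.range fun i =>
      (⟨W i, Submodule.subset_span (Set.mem_range_self i)⟩ :
        Submodule.span ℂ (Set.range W))) := by
    have := (Module.Basis.span hli).span_eq
    rw [hco] at this
    exact this.ge
  refine ⟨OrthonormalBasis.mk (orthonormal_span hW) hsp, fun m => ?_⟩
  rw [OrthonormalBasis.coe_mk]

lemma proj_eq_sum {k N : ℕ} {W : Fin k → EuclideanSpace ℂ (Fin N)} (hW : Orthonormal ℂ W)
    (x : EuclideanSpace ℂ (Fin N)) :
    ((Submodule.orthogonalProjectionOnto (Submodule.span ℂ (Set.range W)) x : EuclideanSpace ℂ (Fin N)))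
      = ∑ m, (inner ℂ (W m) x : ℂ) • W m := by
  obtain ⟨b, hb⟩ := aux_onb hW
  have h := b.orthogonalProjectionOnto_apply_eq_sum x
  calc ((Submodule.orthogonalProjectionOnto (Submodule.span ℂ (Set.range W)) x : EuclideanSpace ℂ (Fin N)))
      = ((∑ m, (inner ℂ ((b m : EuclideanSpace ℂ (Fin N))) x : ℂ) • b m :
          Submodule.span ℂ (Set.range W)) : EuclideanSpace ℂ (Fin N)) := by rw [h]
    _ = ∑ m, (inner ℂ (W m) x : ℂ) • W m := by
        push_cast
        simp [hb]

lemma norm_sum_sq {k N : ℕ} {W : Fin k → EuclideanSpace ℂ (Fin N)} (hW : Orthonormal ℂ W)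
    (c : Fin k → ℂ) : ‖∑ m, c m • W m‖ ^ 2 = ∑ m, ‖c m‖ ^ 2 := by
  have h := hW.inner_sum c c Finset.univ
  have h2 : ‖∑ m, c m • W m‖ ^ 2 = RCLike.re (⟪∑ m, c m • W m, ∑ m, c m • W m⟫_ℂ) :=
    norm_sq_eq_re_inner (𝕜 := ℂ) _
  rw [h2, h, map_sum]
  refine Finset.sum_congr rfl fun m _ => ?_
  rw [RCLike.conj_mul]
  simp [← Complex.ofReal_pow]

theorem statement4 {N k : ℕ} (hk : 1 ≤ k) (hN : 1 ≤ N)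
    (V ξ : Fin k → EuclideanSpace ℂ (Fin N))
    (hV : Orthonormal ℂ V) (hξ : Orthonormal ℂ ξ)
    (α : ℝ) (hα : 0 ≤ α) (αs : Fin k → ℝ) (hαs : ∀ m, 0 ≤ αs m)
    (u : EuclideanSpace ℂ (Fin N)) (hu : ‖u‖ = 1) :
    |‖(Submodule.orthogonalProjectionOnto (Submodule.span ℂ (Set.range V)) u : EuclideanSpace ℂ (Fin N))‖ ^ 2
        - α|
      ≤ (2 * k + α) *
          ‖(Submodule.orthogonalProjectionOnto (Submodule.span ℂ (Set.range ξ))ᗮ u :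
              EuclideanSpace ℂ (Fin N))‖
        + (⨆ m : Fin k, |αs m - α|)
        + ((∑ m : Fin k, |‖(inner ℂ (ξ m) (V m) : ℂ)‖ ^ 2 - αs m|)
            + 2 * ∑ m : Fin k, ∑ n ∈ Finset.univ.erase m, ‖(inner ℂ (ξ n) (V m) : ℂ)‖
            + ∑ m : Fin k, (∑ n ∈ Finset.univ.erase m, ‖(inner ℂ (ξ n) (V m) : ℂ)‖) ^ 2) := by
  classical
  set VS := Submodule.span ℂ (Set.range V) with hVSdef
  set ES := Submodule.span ℂ (Set.range ξ) with hESdef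
  set q : EuclideanSpace ℂ (Fin N) :=
    (Submodule.orthogonalProjectionOnto ES u : EuclideanSpace ℂ (Fin N)) with hqdef
  set w : EuclideanSpace ℂ (Fin N) :=
    (Submodule.orthogonalProjectionOnto ESᗮ u : EuclideanSpace ℂ (Fin N)) with hwdef
  set ε : ℝ := ‖w‖ with hεdef
  have hε0 : 0 ≤ ε := norm_nonneg _
  have hpyth : ‖q‖ ^ 2 + ε ^ 2 = 1 := by
    have h := Submodule.norm_sq_eq_add_norm_sq_projection u ES
    rw [hu, one_pow, Submodule.coe_norm, Submodule.coe_norm] at h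
    rw [hεdef, hqdef, hwdef]
    linarith [h]
  have hq1 : ‖q‖ ≤ 1 := by nlinarith [norm_nonneg q, sq_nonneg ε]
  have hε1 : ε ≤ 1 := by nlinarith [norm_nonneg q, sq_nonneg (‖q‖)]
  -- coefficients of q in the ξ basis
  set c : Fin k → ℂ := fun n => (inner ℂ (ξ n) u : ℂ) with hcdef
  have hq_eq : q = ∑ n, c n • ξ n := proj_eq_sum hξ u
  have hqnorm : ‖q‖ ^ 2 = ∑ n, ‖c n‖ ^ 2 := by rw [hq_eq]; exact norm_sum_sq hξ c
  have hcsum : ∑ n, ‖c n‖ ^ 2 ≤ 1 := by nlinarith [sq_nonneg ε]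
  have hc1 : ∀ n, ‖c n‖ ≤ 1 := by
    intro n
    have h1 : ‖c n‖ ^ 2 ≤ ∑ j, ‖c j‖ ^ 2 :=
      Finset.single_le_sum (f := fun j => ‖c j‖ ^ 2) (fun j _ => by positivity)
        (Finset.mem_univ n)
    nlinarith [norm_nonneg (c n)]
  -- projections onto VS
  set Pu : EuclideanSpace ℂ (Fin N) :=
    (Submodule.orthogonalProjectionOnto VS u : EuclideanSpace ℂ (Fin N)) with hPudef
  set Pq : EuclideanSpace ℂ (Fin N) :=
    (Submodule.orthogonalProjectionOnto VS q : EuclideanSpace ℂ (Fin N)) with hPqdef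
  have hPnorm : ∀ x : EuclideanSpace ℂ (Fin N),
      ‖(Submodule.orthogonalProjectionOnto VS x : EuclideanSpace ℂ (Fin N))‖ ≤ ‖x‖ := by
    intro x
    have h1 := (Submodule.orthogonalProjectionOnto VS).le_opNorm x
    have h2 := Submodule.orthogonalProjectionOnto_norm_le VS
    have h3 : ‖(Submodule.orthogonalProjectionOnto VS x : EuclideanSpace ℂ (Fin N))‖
        = ‖Submodule.orthogonalProjectionOnto VS x‖ := rfl
    rw [h3]
    calc ‖Submodule.orthogonalProjectionOnto VS x‖ ≤ ‖Submodule.orthogonalProjectionOnto VS‖ * ‖x‖ := h1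
      _ ≤ 1 * ‖x‖ := mul_le_mul_of_nonneg_right h2 (norm_nonneg x)
      _ = ‖x‖ := one_mul _
  have hPu1 : ‖Pu‖ ≤ 1 := hu ▸ hPnorm u
  have hPq1 : ‖Pq‖ ≤ 1 := (hPnorm q).trans hq1
  have hdiff : ‖Pu - Pq‖ ≤ ε := by
    have huq : u - q = w := by
      have h := Submodule.starProjection_add_starProjection_orthogonal (K := ES) u
      rw [hqdef, hwdef, eq_comm, eq_sub_iff_add_eq, add_comm]
      exact h
    have h4 : Pu - Pq = (Submodule.orthogonalProjectionOnto VS (u - q) : EuclideanSpace ℂ (Fin N)) := by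
      rw [hPudef, hPqdef, map_sub]
      push_cast
      ring
    rw [h4, huq]
    exact hPnorm w
  have B1 : |‖Pu‖ ^ 2 - ‖Pq‖ ^ 2| ≤ 2 * ε := by
    have h1 : |‖Pu‖ - ‖Pq‖| ≤ ε := (abs_norm_sub_norm_le Pu Pq).trans hdiff
    rw [abs_le] at h1 ⊢
    constructor <;> nlinarith [norm_nonneg Pu, norm_nonneg Pq]
  -- the diagonal and off-diagonal inner products
  set t : Fin k → ℝ := fun m => ‖(inner ℂ (ξ m) (V m) : ℂ)‖ with htdef
  set s : Fin k → ℝ :=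
    fun m => ∑ n ∈ Finset.univ.erase m, ‖(inner ℂ (ξ n) (V m) : ℂ)‖ with hsdef
  have hs0 : ∀ m, 0 ≤ s m := fun m => Finset.sum_nonneg fun n _ => norm_nonneg _
  have ht0 : ∀ m, 0 ≤ t m := fun m => norm_nonneg _
  have ht1 : ∀ m, t m ≤ 1 := by
    intro m
    have h := norm_inner_le_norm (𝕜 := ℂ) (ξ m) (V m)
    rw [hξ.1 m, hV.1 m] at h
    simpa using h
  set d : Fin k → ℂ := fun m => (inner ℂ (V m) q : ℂ) with hddef
  have hPq_eq : Pq = ∑ m, d m • V m := proj_eq_sum hV q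
  have hPqnorm : ‖Pq‖ ^ 2 = ∑ m, ‖d m‖ ^ 2 := by rw [hPq_eq]; exact norm_sum_sq hV d
  have hd_expand : ∀ m, d m = ∑ n, c n * (inner ℂ (V m) (ξ n) : ℂ) := by
    intro m
    have : d m = (inner ℂ (V m) (∑ n, c n • ξ n) : ℂ) := by rw [hddef, hq_eq]
    rw [this, inner_sum]
    simp [inner_smul_right]
  have hd_bound : ∀ m, |‖d m‖ - ‖c m‖ * t m| ≤ s m := by
    intro m
    set r : ℂ := ∑ n ∈ Finset.univ.erase m, c n * (inner ℂ (V m) (ξ n) : ℂ) with hrdef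
    have hsplit : d m = c m * (inner ℂ (V m) (ξ m) : ℂ) + r := by
      rw [hd_expand m, hrdef, ← Finset.add_sum_erase _ _ (Finset.mem_univ m)]
    have hr : ‖r‖ ≤ s m := by
      refine (norm_sum_le _ _).trans ?_
      refine Finset.sum_le_sum fun n _ => ?_
      rw [norm_mul, ← norm_inner_symm (𝕜 := ℂ) (ξ n) (V m)]
      exact mul_le_of_le_one_left (norm_nonneg _) (hc1 n)
    have hnm : ‖c m * (inner ℂ (V m) (ξ m) : ℂ)‖ = ‖c m‖ * t m := by
      rw [norm_mul, htdef]
      rw [norm_inner_symm (𝕜 := ℂ) (V m) (ξ m)]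
    have habs : |‖d m‖ - ‖c m * (inner ℂ (V m) (ξ m) : ℂ)‖| ≤ ‖r‖ := by
      rw [hsplit]
      refine (abs_norm_sub_norm_le _ _).trans ?_
      rw [add_sub_cancel_left]
    rw [hnm] at habs
    exact habs.trans hr
  have hd2 : ∀ m, |‖d m‖ ^ 2 - ‖c m‖ ^ 2 * t m ^ 2| ≤ 2 * s m + s m ^ 2 := by
    intro m
    have h1 := hd_bound m
    have hy1 : ‖c m‖ * t m ≤ 1 := by nlinarith [hc1 m, ht1 m, ht0 m, norm_nonneg (c m)]
    have hy0 : 0 ≤ ‖c m‖ * t m := mul_nonneg (norm_nonneg _) (ht0 m)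
    rw [abs_le] at h1 ⊢
    have hx0 : (0:ℝ) ≤ ‖d m‖ := norm_nonneg _
    have hs := hs0 m
    constructor
    · nlinarith [h1.1, h1.2]
    · nlinarith [h1.1, h1.2, mul_nonneg hs hy0]
  set S1 : ℝ := ∑ m, ‖c m‖ ^ 2 * t m ^ 2 with hS1def
  have B2 : |‖Pq‖ ^ 2 - S1| ≤ 2 * (∑ m, s m) + ∑ m, s m ^ 2 := by
    rw [hPqnorm, hS1def, ← Finset.sum_sub_distrib]
    refine (Finset.abs_sum_le_sum_abs _ _).trans ?_
    rw [Finset.mul_sum, ← Finset.sum_add_distrib]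
    exact Finset.sum_le_sum fun m _ => hd2 m
  set M : ℝ := ⨆ m : Fin k, |αs m - α| with hMdef
  have hknz : Nonempty (Fin k) := ⟨⟨0, hk⟩⟩
  have hM : ∀ m, |αs m - α| ≤ M := fun m =>
    le_ciSup (f := fun m => |αs m - α|) (Set.Finite.bddAbove (Set.finite_range _)) m
  have hM0 : 0 ≤ M := le_trans (abs_nonneg _) (hM ⟨0, hk⟩)
  have B3 : |S1 - α| ≤ (∑ m, |t m ^ 2 - αs m|) + M + α * ε := by
    have e1 : S1 - α = (∑ m, ‖c m‖ ^ 2 * (t m ^ 2 - αs m))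
        + (∑ m, ‖c m‖ ^ 2 * (αs m - α)) + ((∑ m, ‖c m‖ ^ 2) - 1) * α := by
      have e0 : ∀ m : Fin k, ‖c m‖ ^ 2 * t m ^ 2
          = ‖c m‖ ^ 2 * (t m ^ 2 - αs m) + ‖c m‖ ^ 2 * (αs m - α) + ‖c m‖ ^ 2 * α := by
        intro m; ring
      rw [hS1def, Finset.sum_congr rfl fun m _ => e0 m, Finset.sum_add_distrib,
        Finset.sum_add_distrib, ← Finset.sum_mul]
      ring
    have i1 : |∑ m, ‖c m‖ ^ 2 * (t m ^ 2 - αs m)| ≤ ∑ m, |t m ^ 2 - αs m| := by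
      refine (Finset.abs_sum_le_sum_abs _ _).trans (Finset.sum_le_sum fun m _ => ?_)
      rw [abs_mul, abs_of_nonneg (by positivity : (0:ℝ) ≤ ‖c m‖ ^ 2)]
      have hc2 : ‖c m‖ ^ 2 ≤ 1 := by nlinarith [hc1 m, norm_nonneg (c m)]
      exact mul_le_of_le_one_left (abs_nonneg _) hc2
    have i2 : |∑ m, ‖c m‖ ^ 2 * (αs m - α)| ≤ M := by
      refine (Finset.abs_sum_le_sum_abs _ _).trans ?_
      calc ∑ m, |‖c m‖ ^ 2 * (αs m - α)| ≤ ∑ m, ‖c m‖ ^ 2 * M := by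
            refine Finset.sum_le_sum fun m _ => ?_
            rw [abs_mul, abs_of_nonneg (by positivity : (0:ℝ) ≤ ‖c m‖ ^ 2)]
            exact mul_le_mul_of_nonneg_left (hM m) (by positivity)
        _ = (∑ m, ‖c m‖ ^ 2) * M := (Finset.sum_mul _ _ _).symm
        _ ≤ 1 * M := mul_le_mul_of_nonneg_right hcsum hM0
        _ = M := one_mul M
    have i3 : |((∑ m, ‖c m‖ ^ 2) - 1) * α| ≤ α * ε := by
      have he : (∑ m, ‖c m‖ ^ 2) - 1 = -ε ^ 2 := by
        rw [← hqnorm]; linarith [hpyth]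
      have habs : |(-ε ^ 2 : ℝ)| = ε ^ 2 := by
        rw [abs_neg, abs_of_nonneg (sq_nonneg ε)]
      rw [he, abs_mul, habs, abs_of_nonneg hα]
      nlinarith [mul_nonneg (mul_nonneg hα hε0) (sub_nonneg.2 hε1)]
    rw [e1]
    refine (abs_add_le _ _).trans ?_
    have h5 := abs_add_le (∑ m, ‖c m‖ ^ 2 * (t m ^ 2 - αs m)) (∑ m, ‖c m‖ ^ 2 * (αs m - α))
    linarith [i1, i2, i3]
  have hkge : (1:ℝ) ≤ (k:ℝ) := by exact_mod_cast hk
  have final : |‖Pu‖ ^ 2 - α| ≤ (2 * (k:ℝ) + α) * ε + M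
      + ((∑ m, |t m ^ 2 - αs m|) + 2 * ∑ m, s m + ∑ m, s m ^ 2) := by
    have hkε : ε ≤ (k:ℝ) * ε := by nlinarith
    rw [abs_le] at B1 B2 B3 ⊢
    constructor
    · nlinarith [B1.1, B2.1, B3.1, hα, hε0, hε1]
    · nlinarith [B1.2, B2.2, B3.2, hα, hε0, hε1]
  exact final
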